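/- arXiv:1909.11593 — 5 statements merged into one kernel-verified Lean document; each statement's English description precedes it below -/
import Mathlib

section
/- If a timed word v with letters (τ_j,(σ'_j,ρ'_j)) refines an observation u with letters (Iᵢ,(σᵢ,ρᵢ)) (i.e., u ⊑ v), then there exists a monotone function π : ℕ → pos(u) such that for every j ∈ ℕ: τ_j ∈ I_{π(j)}, σ_{π(j)} ⊑ σ'_j, and ρ_{π(j)} ⊑ ρ'_j. -/
open scoped Classical

namespace RV

/-- The time domain: nonnegative rationals. -/
abbrev Q := NNRat

/-- An interval: a nonempty, order-convex subset of `ℚ≥0`. -/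
def IsInterval (I : Set Q) : Prop :=
  I.Nonempty ∧ ∀ a ∈ I, ∀ b ∈ I, ∀ c : Q, a ≤ c → c ≤ b → c ∈ I

abbrev Iv : Type := {I : Set Q // IsInterval I}

/-- `I − J := {τ − τ' | τ ∈ I, τ' ∈ J} ∩ ℚ≥0` (the set of nonnegative differences). -/
def ivSub (I J : Set Q) : Set Q := {d | ∃ τ ∈ I, ∃ τ' ∈ J, τ' + d = τ}

/-- The three truth values. -/
inductive Tri : Type
  | tt | ff | unk
  deriving DecidableEq

namespace Tri

/-- strong Kleene negation -/
def neg : Tri → Tri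
  | tt => ff
  | ff => tt
  | unk => unk

/-- strong Kleene disjunction -/
def kor : Tri → Tri → Tri
  | tt, _ => tt
  | ff, y => y
  | unk, tt => tt
  | unk, _ => unk

/-- strong Kleene conjunction -/
def kand : Tri → Tri → Tri
  | ff, _ => ff
  | tt, y => y
  | unk, ff => ff
  | unk, _ => unk

/-- strong Kleene implication -/
def kimp (x y : Tri) : Tri := kor (neg x) y

/-- The knowledge order `≼` on truth values (reflexive closure of `⊥ ≺ t`, `⊥ ≺ f`). -/
def le : Tri → Tri → Prop
  | unk, _ => True
  | x, y => x = y

def ofBool : Bool → Tri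
  | true => tt
  | false => ff

/-- `x ∈ 𝟚` -/
def IsBool (x : Tri) : Prop := x ≠ unk

/-- binary meet with respect to the knowledge order -/
def meet : Tri → Tri → Tri
  | tt, tt => tt
  | ff, ff => ff
  | _, _ => unk

end Tri

/-- Kleene disjunction of a finite family. -/
def kOrList (l : List Tri) : Tri := l.foldr Tri.kor Tri.ff

/-- Kleene conjunction of a finite family. -/
def kAndList (l : List Tri) : Tri := l.foldr Tri.kand Tri.tt

/-- A letter of an observation: an interval together with an alphabet element. -/
abbrev Letter (A : Type*) : Type _ := Set Q × A

/-- The interval of the letter at position `i` (`∅` out of range). -/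
def ivAt {A : Type*} (w : List (Letter A)) (i : ℕ) : Set Q :=
  (w[i]?.map Prod.fst).getD ∅

/-- The alphabet component of the letter at position `i` (default out of range). -/
def letAt {A : Type*} (a0 : A) (w : List (Letter A)) (i : ℕ) : A :=
  (w[i]?.map Prod.snd).getD a0

/-- `tp_w(i)`: `t` if position `i` is a time point, `⊥` otherwise. -/
noncomputable def tp {A : Type*} (w : List (Letter A)) (i : ℕ) : Tri :=
  if ∃ τ : Q, ivAt w i = {τ} then Tri.tt else Tri.unk

/-- `mc_{w,I}(i,j)`: validity of the metric constraint `I` between positions `i` and `j`. -/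
noncomputable def mc {A : Type*} (w : List (Letter A)) (I : Set Q) (i j : ℕ) : Tri :=
  if (ivSub (ivAt w i) (ivAt w j)).Nonempty ∧ ivSub (ivAt w i) (ivAt w j) ⊆ I then Tri.tt
  else if ivSub (ivAt w i) (ivAt w j) ∩ I = ∅ then Tri.ff
  else Tri.unk

/-- The one-step transformations (T1), (T2), (T3) on observations, over an alphabet
with strict order `lt`. -/
inductive Step {A : Type*} (lt : A → A → Prop) : List (Letter A) → List (Letter A) → Prop
  | split (u v : List (Letter A)) (I : Set Q) (a : A) (τ : Q)
      (hI : ¬ I.Subsingleton) (hτ : τ ∈ I) (hpos : 0 < τ) :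
      Step lt (u ++ (I, a) :: v)
        (u ++ (I ∩ Set.Iio τ, a) :: (({τ} : Set Q), a) :: (I ∩ Set.Ioi τ, a) :: v)
  | split0 (u v : List (Letter A)) (I : Set Q) (a : A)
      (hI : ¬ I.Subsingleton) (hτ : (0 : Q) ∈ I) :
      Step lt (u ++ (I, a) :: v)
        (u ++ (({0} : Set Q), a) :: (I ∩ Set.Ioi 0, a) :: v)
  | remove (u v : List (Letter A)) (I : Set Q) (a : A)
      (hI : ¬ I.Subsingleton) (hbd : BddAbove I) :
      Step lt (u ++ (I, a) :: v) (u ++ v)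
  | data (u v : List (Letter A)) (τ : Q) (a a' : A) (h : lt a a') :
      Step lt (u ++ (({τ} : Set Q), a) :: v) (u ++ (({τ} : Set Q), a') :: v)

/-- The set `Obs(Σ)` of observations, defined inductively from the initial
observation `([0,∞), a₀)` by the transformations (T1)–(T3). -/
inductive Obs {A : Type*} (lt : A → A → Prop) (a0 : A) : List (Letter A) → Prop
  | base : Obs lt a0 [(Set.univ, a0)]
  | step {w w' : List (Letter A)} : Obs lt a0 w → Step lt w w' → Obs lt a0 w'

/-- The refinement relation `⊑` on observations: reflexive-transitive closure of the
one-step transformation relation. -/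
def Refines {A : Type*} (lt : A → A → Prop) : List (Letter A) → List (Letter A) → Prop :=
  Relation.ReflTransGen (Step lt)

/-- Extension order on partial functions. -/
def pext {α : Type*} {β : α → Type*} (f g : (a : α) → Option (β a)) : Prop :=
  ∀ a b, f a = some b → g a = some b

/-- The alphabet `Σ`: pairs of partial interpretations of predicate symbols and registers. -/
abbrev Sig (P : Type) (ι : P → ℕ) (R D : Type) : Type :=
  ((p : P) → Option (Set (Fin (ι p) → D))) × (R → Option D)

def sigLe {P : Type} {ι : P → ℕ} {R D : Type} (s s' : Sig P ι R D) : Prop :=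
  pext s.1 s'.1 ∧ pext s.2 s'.2

def sigLt {P : Type} {ι : P → ℕ} {R D : Type} (s s' : Sig P ι R D) : Prop :=
  sigLe s s' ∧ s ≠ s'

/-- The least element `(∅, ∅)` of `Σ`. -/
def botSig {P : Type} {ι : P → ℕ} {R D : Type} : Sig P ι R D :=
  (fun _ => none, fun _ => none)

/-- MTL↓ formulas. -/
inductive Formula (P : Type) (ι : P → ℕ) (V R : Type) : Type
  | tt : Formula P ι V R
  | pred (p : P) (args : Fin (ι p) → V) : Formula P ι V R
  | freeze (r : R) (x : V) (φ : Formula P ι V R) : Formula P ι V R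
  | neg (φ : Formula P ι V R) : Formula P ι V R
  | or (φ ψ : Formula P ι V R) : Formula P ι V R
  | prev (I : Iv) (φ : Formula P ι V R) : Formula P ι V R
  | next (I : Iv) (φ : Formula P ι V R) : Formula P ι V R
  | since (I : Iv) (φ ψ : Formula P ι V R) : Formula P ι V R
  | until (I : Iv) (φ ψ : Formula P ι V R) : Formula P ι V R

section Disjuncts
variable {A : Type*}

/-- The disjunct `c₀` in the semantics of `•_I` and `○_I`. -/
noncomputable def cZero (w : List (Letter A)) (I : Set Q) (g : ℕ → Tri) (i : ℕ) : Tri :=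
  if I ≠ ({0} : Set Q) then (mc w I i i).kand ((g i).kand (tp w i).neg) else Tri.ff

/-- The disjunct `c₁` in the semantics of `○_I`. -/
noncomputable def cNext1 (w : List (Letter A)) (I : Set Q) (g : ℕ → Tri) (i : ℕ) : Tri :=
  if i + 1 < w.length then
    (mc w I (i + 1) i).kand ((g (i + 1)).kand ((tp w (i + 1)).kand (tp w i)))
  else Tri.ff

/-- The disjunct `c₂` in the semantics of `○_I`. -/
noncomputable def cNext2 (w : List (Letter A)) (I : Set Q) (g : ℕ → Tri) (i : ℕ) : Tri :=
  if i + 2 < w.length then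
    (mc w I (i + 2) i).kand ((g (i + 2)).kand (tp w (i + 1)).neg)
  else Tri.ff

/-- The disjunct `c₋₁` in the semantics of `•_I`. -/
noncomputable def cPrev1 (w : List (Letter A)) (I : Set Q) (g : ℕ → Tri) (i : ℕ) : Tri :=
  if 1 ≤ i then
    (mc w I i (i - 1)).kand ((g (i - 1)).kand ((tp w (i - 1)).kand (tp w i)))
  else Tri.ff

/-- The disjunct `c₋₂` in the semantics of `•_I`. -/
noncomputable def cPrev2 (w : List (Letter A)) (I : Set Q) (g : ℕ → Tri) (i : ℕ) : Tri :=
  if 2 ≤ i then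
    (mc w I i (i - 2)).kand ((g (i - 2)).kand (tp w (i - 1)).neg)
  else Tri.ff

end Disjuncts

variable {P : Type} {ι : P → ℕ} {V R D : Type}

/-- The three-valued semantics `⟦w,i,ν⟧(φ) ∈ 𝟛` of MTL↓ on observations. -/
noncomputable def osem [DecidableEq V] (w : List (Letter (Sig P ι R D))) :
    Formula P ι V R → ℕ → (V → Option D) → Tri
  | .tt, _, _ => Tri.tt
  | .pred p args, i, ν =>
      if ∃ (S : Set (Fin (ι p) → D)) (f : Fin (ι p) → D),
          (letAt botSig w i).1 p = some S ∧ (∀ k, ν (args k) = some (f k)) ∧ f ∈ S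
      then Tri.tt
      else if ∃ (S : Set (Fin (ι p) → D)) (f : Fin (ι p) → D),
          (letAt botSig w i).1 p = some S ∧ (∀ k, ν (args k) = some (f k)) ∧ f ∉ S
      then Tri.ff
      else Tri.unk
  | .freeze r x φ, i, ν => osem w φ i (Function.update ν x ((letAt botSig w i).2 r))
  | .neg φ, i, ν => (osem w φ i ν).neg
  | .or φ ψ, i, ν => (osem w φ i ν).kor (osem w ψ i ν)
  | .since I φ ψ, i, ν =>
      kOrList ((List.range (i + 1)).map fun j =>
        (tp w j).kand ((mc w I.1 i j).kand ((osem w ψ j ν).kand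
          (kAndList ((List.range' (j + 1) (i - j)).map fun k =>
            (tp w k).kimp (osem w φ k ν))))))
  | .until I φ ψ, i, ν =>
      kOrList ((List.range' i (w.length - i)).map fun j =>
        (tp w j).kand ((mc w I.1 j i).kand ((osem w ψ j ν).kand
          (kAndList ((List.range' i (j - i)).map fun k =>
            (tp w k).kimp (osem w φ k ν))))))
  | .prev I φ, i, ν =>
      (cZero w I.1 (fun k => osem w φ k ν) i).kor
        ((cPrev1 w I.1 (fun k => osem w φ k ν) i).kor
          (cPrev2 w I.1 (fun k => osem w φ k ν) i))
  | .next I φ, i, ν =>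
      (cZero w I.1 (fun k => osem w φ k ν) i).kor
        ((cNext1 w I.1 (fun k => osem w φ k ν) i).kor
          (cNext2 w I.1 (fun k => osem w φ k ν) i))

/-- The position of the time point of `w` with timestamp `τ`, if any. -/
noncomputable def tpPos {A : Type*} (w : List (Letter A)) (τ : Q) : Option ℕ :=
  (List.range w.length).find? fun i => decide (ivAt w i = ({τ} : Set Q))

/-- `⟦w,τ,ν⟧ᵉ(φ)`: the three-valued semantics at timestamp `τ`. -/
noncomputable def osemE [DecidableEq V] (w : List (Letter (Sig P ι R D)))
    (φ : Formula P ι V R) (τ : Q) (ν : V → Option D) : Tri :=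
  match tpPos w τ with
  | some i => osem w φ i ν
  | none => Tri.unk

/-- A timed word over `A`: strictly increasing, nonzeno timestamps. -/
structure TimedWord (A : Type*) where
  seq : ℕ → Q × A
  strictMono : StrictMono fun j => (seq j).1
  nonzeno : ∀ t : Q, ∃ j, t < (seq j).1

/-- The Boolean semantics of MTL↓ on timed words. -/
def bsem (v : ℕ → Q × Sig P ι R D) : Formula P ι V R → ℕ → (V → Option D) → Prop
  | .tt, _, _ => True
  | .pred p args, j, ν =>
      ∃ (S : Set (Fin (ι p) → D)) (f : Fin (ι p) → D),
        ((v j).2).1 p = some S ∧ (∀ k, ν (args k) = some (f k)) ∧ f ∈ S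
  | .freeze r x φ, j, ν => bsem v φ j (Function.update ν x (((v j).2).2 r))
  | .neg φ, j, ν => ¬ bsem v φ j ν
  | .or φ ψ, j, ν => bsem v φ j ν ∨ bsem v ψ j ν
  | .prev I φ, j, ν =>
      0 < j ∧ (∃ d ∈ I.1, (v (j - 1)).1 + d = (v j).1) ∧ bsem v φ (j - 1) ν
  | .next I φ, j, ν =>
      (∃ d ∈ I.1, (v j).1 + d = (v (j + 1)).1) ∧ bsem v φ (j + 1) ν
  | .since I φ ψ, j, ν =>
      ∃ j' ≤ j, (∃ d ∈ I.1, (v j').1 + d = (v j).1) ∧ bsem v ψ j' ν ∧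
        ∀ k, j' < k → k ≤ j → bsem v φ k ν
  | .until I φ ψ, j, ν =>
      ∃ j', j ≤ j' ∧ (∃ d ∈ I.1, (v j).1 + d = (v j').1) ∧ bsem v ψ j' ν ∧
        ∀ k, j ≤ k → k < j' → bsem v φ k ν

/-- `⟦v,τ,ν⟧ᵉ(φ)` on timed words: the Boolean value at timestamp `τ`, `⊥` if `τ` is
not a timestamp of `v`. -/
noncomputable def bsemE (v : ℕ → Q × Sig P ι R D) (φ : Formula P ι V R)
    (τ : Q) (ν : V → Option D) : Tri :=
  if ∃ j, (v j).1 = τ ∧ bsem v φ j ν then Tri.tt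
  else if ∃ j, (v j).1 = τ then Tri.ff
  else Tri.unk

/-- A timed word `v` refines an observation `u`. -/
def RefinesTW (u : List (Letter (Sig P ι R D))) (v : ℕ → Q × Sig P ι R D) : Prop :=
  ∀ j : ℕ, ∃ i, i < u.length ∧ (v j).1 ∈ ivAt u i ∧ sigLe (letAt botSig u i) ((v j).2)

/-- Free variables of a formula. -/
def freeVars : Formula P ι V R → Set V
  | .tt => ∅
  | .pred _ args => Set.range args
  | .freeze _ x φ => freeVars φ \ {x}
  | .neg φ => freeVars φ
  | .or φ ψ => freeVars φ ∪ freeVars ψ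
  | .prev _ φ => freeVars φ
  | .next _ φ => freeVars φ
  | .since _ φ ψ => freeVars φ ∪ freeVars ψ
  | .until _ φ ψ => freeVars φ ∪ freeVars ψ

/-- A closed formula. -/
def Closed (φ : Formula P ι V R) : Prop := freeVars φ = ∅

/-- A valid observation sequence. -/
def ValidObsSeq (ws : ℕ → List (Letter (Sig P ι R D))) : Prop :=
  ws 0 = [(Set.univ, botSig)] ∧
    ∀ i, Refines sigLt (ws i) (ws (i + 1)) ∧ ws i ≠ ws (i + 1)

/-- The meet (in the lower semilattice `(𝟛,≺)`) of the values of `f` over `U`: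
a Boolean value `b` if the family is nonempty and constantly `b`, else `⊥`. -/
noncomputable def meetOver {α : Type*} (U : Set α) (f : α → Tri) : Tri :=
  if U.Nonempty ∧ ∀ a ∈ U, f a = Tri.tt then Tri.tt
  else if U.Nonempty ∧ ∀ a ∈ U, f a = Tri.ff then Tri.ff
  else Tri.unk

/-- `U_w`: the set of timed words refining the observation `w`. -/
def UW (w : List (Letter (Sig P ι R D))) : Set (TimedWord (Sig P ι R D)) :=
  {v | RefinesTW w v.seq}

/-- Observational soundness of a sequence of verdict sets. -/
def ObsSound [DecidableEq V] (φ : Formula P ι V R)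
    (ws : ℕ → List (Letter (Sig P ι R D))) (Vs : ℕ → Set (Q × Bool)) : Prop :=
  ∀ (ν : V → Option D) (i : ℕ) (τ : Q) (b : Bool),
    (τ, b) ∈ Vs i → osemE (ws i) φ τ ν = Tri.ofBool b

/-- Observational completeness of a sequence of verdict sets. -/
def ObsComplete [DecidableEq V] (φ : Formula P ι V R)
    (ws : ℕ → List (Letter (Sig P ι R D))) (Vs : ℕ → Set (Q × Bool)) : Prop :=
  ∀ (ν : V → Option D) (i : ℕ) (τ : Q),
    (osemE (ws i) φ τ ν).IsBool → ∃ b : Bool, ∃ j ≤ i, (τ, b) ∈ Vs j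

/-- Soundness of a sequence of verdict sets. -/
def Sound (φ : Formula P ι V R)
    (ws : ℕ → List (Letter (Sig P ι R D))) (Vs : ℕ → Set (Q × Bool)) : Prop :=
  ∀ (ν : V → D) (i : ℕ) (τ : Q) (b : Bool), (τ, b) ∈ Vs i →
    meetOver (UW (ws i)) (fun v => bsemE v.seq φ τ fun x => some (ν x)) = Tri.ofBool b

/-- Completeness of a sequence of verdict sets. -/
def Complete (φ : Formula P ι V R)
    (ws : ℕ → List (Letter (Sig P ι R D))) (Vs : ℕ → Set (Q × Bool)) : Prop :=
  ∀ (ν : V → D) (i : ℕ) (τ : Q),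
    (meetOver (UW (ws i)) (fun v => bsemE v.seq φ τ fun x => some (ν x))).IsBool →
    ∃ b : Bool, ∃ j ≤ i, (τ, b) ∈ Vs j

end RV
namespace RV

/-! ## Propositional formulas and the reduction to propositional logic -/

/-- Propositional formulas over atoms `A`. -/
inductive PForm (A : Type*) : Type _
  | tr : PForm A
  | fa : PForm A
  | var (a : A) : PForm A
  | neg (φ : PForm A) : PForm A
  | and (φ ψ : PForm A) : PForm A
  | or (φ ψ : PForm A) : PForm A
  | imp (φ ψ : PForm A) : PForm A

namespace PForm

def eval {A : Type*} (v : A → Bool) : PForm A → Bool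
  | tr => true
  | fa => false
  | var a => v a
  | neg φ => ! φ.eval v
  | and φ ψ => φ.eval v && ψ.eval v
  | or φ ψ => φ.eval v || ψ.eval v
  | imp φ ψ => (! φ.eval v) || ψ.eval v

/-- Apply a substitution of Boolean constants for some of the atoms. -/
def applyS {A : Type*} (θ : A → Option Bool) : PForm A → PForm A
  | tr => tr
  | fa => fa
  | var a => match θ a with
      | some true => tr
      | some false => fa
      | none => var a
  | neg φ => neg (φ.applyS θ)
  | and φ ψ => and (φ.applyS θ) (ψ.applyS θ)
  | or φ ψ => or (φ.applyS θ) (ψ.applyS θ)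
  | imp φ ψ => imp (φ.applyS θ) (ψ.applyS θ)

def ofBool {A : Type*} : Bool → PForm A
  | true => tr
  | false => fa

end PForm

/-- Semantic equivalence of propositional formulas. -/
def PEquiv {A : Type*} (φ ψ : PForm A) : Prop := ∀ v : A → Bool, φ.eval v = ψ.eval v

def pOr {A : Type*} (l : List (PForm A)) : PForm A := l.foldr PForm.or PForm.fa
def pAnd {A : Type*} (l : List (PForm A)) : PForm A := l.foldr PForm.and PForm.tr

/-- The substitution replacing the single atom `a` by the constant `c`. -/
noncomputable def substOne {A : Type*} (a : A) (c : Bool) : A → Option Bool :=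
  fun b => if b = a then some c else none

/-- A propositional formula `Θ` depends on an atom `a` if `[a↦t]Θ ≢ [a↦f]Θ`. -/
def Depends {A : Type*} (Θ : PForm A) (a : A) : Prop :=
  ¬ PEquiv (Θ.applyS (substOne a true)) (Θ.applyS (substOne a false))

variable {P : Type} {ι : P → ℕ} {V R D : Type}

/-- Atoms of the propositional formulas `Ψ_w^{γ,J,ν}`: propositions `α^{K,μ}`,
`tp^K`, `t̄p^K`, and `mc_I^{H,K}` (intervals named by their positions in `w`). -/
inductive DAtom (P : Type) (ι : P → ℕ) (V R D : Type) : Type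
  | sub (α : Formula P ι V R) (k : ℕ) (μ : V → Option D) : DAtom P ι V R D
  | tp (k : ℕ) : DAtom P ι V R D
  | tpbar (k : ℕ) : DAtom P ι V R D
  | mc (I : Set Q) (h k : ℕ) : DAtom P ι V R D

/-- The propositional formula `Ψ_w^{γ,J,ν}` (with the extra anchor conjuncts
`t̄p^K → α^{K,ν}` for `S_I` and `U_I`). -/
noncomputable def PsiD [DecidableEq V] (w : List (Letter (Sig P ι R D))) :
    Formula P ι V R → ℕ → (V → Option D) → PForm (DAtom P ι V R D)
  | .tt, _, _ => .tr
  | .pred p args, j, ν => .var (.sub (.pred p args) j ν)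
  | .freeze r x φ, j, ν => .var (.sub φ j (Function.update ν x ((letAt botSig w j).2 r)))
  | .neg φ, j, ν => .neg (.var (.sub φ j ν))
  | .or φ ψ, j, ν => .or (.var (.sub φ j ν)) (.var (.sub ψ j ν))
  | .since I φ ψ, j, ν =>
      pOr ((List.range (j + 1)).map fun k =>
        .and (.var (.tp k)) (.and (.var (.mc I.1 j k)) (.and (.var (.sub ψ k ν))
          (.and (.imp (.var (.tpbar k)) (.var (.sub φ k ν)))
            (pAnd ((List.range' (k + 1) (j - k)).map fun h =>
              .imp (.var (.tp h)) (.var (.sub φ h ν))))))))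
  | .until I φ ψ, j, ν =>
      pOr ((List.range' j (w.length - j)).map fun k =>
        .and (.var (.tp k)) (.and (.var (.mc I.1 k j)) (.and (.var (.sub ψ k ν))
          (.and (.imp (.var (.tpbar k)) (.var (.sub φ k ν)))
            (pAnd ((List.range' j (k - j)).map fun h =>
              .imp (.var (.tp h)) (.var (.sub φ h ν))))))))
  | .prev I φ, j, ν =>
      .or (if I.1 ≠ ({0} : Set Q) then
              .and (.var (.mc I.1 j j)) (.and (.var (.sub φ j ν)) (.neg (.var (.tp j))))
            else .fa)
        (.or (if 1 ≤ j then
                .and (.var (.mc I.1 j (j - 1))) (.and (.var (.sub φ (j - 1) ν))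
                  (.and (.var (.tp (j - 1))) (.var (.tp j))))
              else .fa)
          (if 2 ≤ j then
              .and (.var (.mc I.1 j (j - 2))) (.and (.var (.sub φ (j - 2) ν))
                (.neg (.var (.tp (j - 1)))))
            else .fa))
  | .next I φ, j, ν =>
      .or (if I.1 ≠ ({0} : Set Q) then
              .and (.var (.mc I.1 j j)) (.and (.var (.sub φ j ν)) (.neg (.var (.tp j))))
            else .fa)
        (.or (if j + 1 < w.length then
                .and (.var (.mc I.1 (j + 1) j)) (.and (.var (.sub φ (j + 1) ν))
                  (.and (.var (.tp (j + 1))) (.var (.tp j))))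
              else .fa)
          (if j + 2 < w.length then
              .and (.var (.mc I.1 (j + 2) j)) (.and (.var (.sub φ (j + 2) ν))
                (.neg (.var (.tp (j + 1)))))
            else .fa))

/-- The propositional formula `Φ_w^{γ,J,ν}` (without the extra anchor conjuncts). -/
noncomputable def PhiD [DecidableEq V] (w : List (Letter (Sig P ι R D))) :
    Formula P ι V R → ℕ → (V → Option D) → PForm (DAtom P ι V R D)
  | .since I φ ψ, j, ν =>
      pOr ((List.range (j + 1)).map fun k =>
        .and (.var (.tp k)) (.and (.var (.mc I.1 j k)) (.and (.var (.sub ψ k ν))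
          (pAnd ((List.range' (k + 1) (j - k)).map fun h =>
            .imp (.var (.tp h)) (.var (.sub φ h ν)))))))
  | .until I φ ψ, j, ν =>
      pOr ((List.range' j (w.length - j)).map fun k =>
        .and (.var (.tp k)) (.and (.var (.mc I.1 k j)) (.and (.var (.sub ψ k ν))
          (pAnd ((List.range' j (k - j)).map fun h =>
            .imp (.var (.tp h)) (.var (.sub φ h ν)))))))
  | γ, j, ν => PsiD w γ j ν

/-- The substitution `θ_w`. -/
noncomputable def thetaD [DecidableEq V] (w : List (Letter (Sig P ι R D))) :
    DAtom P ι V R D → Option Bool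
  | .sub α k μ =>
      match osem w α k μ with
      | .tt => some true
      | .ff => some false
      | .unk => none
  | .tp k => if ∃ τ : Q, ivAt w k = {τ} then some true else none
  | .tpbar k => if ∃ τ : Q, ivAt w k = {τ} then some false else none
  | .mc I h k =>
      if (ivSub (ivAt w h) (ivAt w k)).Nonempty ∧ ivSub (ivAt w h) (ivAt w k) ⊆ I then some true
      else if ivSub (ivAt w h) (ivAt w k) ∩ I = ∅ then some false
      else none

/-! ## Subformulas and relevant valuations -/

/-- `DirectSub ψ γ`: `ψ` is a direct subformula of `γ` (`γ` is `ψ`'s parent formula). -/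
inductive DirectSub : Formula P ι V R → Formula P ι V R → Prop
  | freeze (r : R) (x : V) (φ : Formula P ι V R) : DirectSub φ (.freeze r x φ)
  | neg (φ : Formula P ι V R) : DirectSub φ (.neg φ)
  | orl (φ ψ : Formula P ι V R) : DirectSub φ (.or φ ψ)
  | orr (φ ψ : Formula P ι V R) : DirectSub ψ (.or φ ψ)
  | prev (I : Iv) (φ : Formula P ι V R) : DirectSub φ (.prev I φ)
  | next (I : Iv) (φ : Formula P ι V R) : DirectSub φ (.next I φ)
  | sincel (I : Iv) (φ ψ : Formula P ι V R) : DirectSub φ (.since I φ ψ)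
  | sincer (I : Iv) (φ ψ : Formula P ι V R) : DirectSub ψ (.since I φ ψ)
  | untill (I : Iv) (φ ψ : Formula P ι V R) : DirectSub φ (.until I φ ψ)
  | untilr (I : Iv) (φ ψ : Formula P ι V R) : DirectSub ψ (.until I φ ψ)

/-- `ψ` is a subformula of `φ`. -/
def SubfOf (ψ φ : Formula P ι V R) : Prop := Relation.ReflTransGen DirectSub ψ φ

/-- `ψ` is a proper subformula of `φ`. -/
def ProperSubf (ψ φ : Formula P ι V R) : Prop := Relation.TransGen DirectSub ψ φ

/-- The list of all subformula occurrences of a formula. -/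
def subList : Formula P ι V R → List (Formula P ι V R)
  | .tt => [.tt]
  | .pred p args => [.pred p args]
  | .freeze r x φ => .freeze r x φ :: subList φ
  | .neg φ => .neg φ :: subList φ
  | .or φ ψ => .or φ ψ :: (subList φ ++ subList ψ)
  | .prev I φ => .prev I φ :: subList φ
  | .next I φ => .next I φ :: subList φ
  | .since I φ ψ => .since I φ ψ :: (subList φ ++ subList ψ)
  | .until I φ ψ => .until I φ ψ :: (subList φ ++ subList ψ)

/-- The list of variables frozen in a formula (with multiplicity). -/
def frozenVarsL : Formula P ι V R → List V
  | .tt => []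
  | .pred _ _ => []
  | .freeze _ x φ => x :: frozenVarsL φ
  | .neg φ => frozenVarsL φ
  | .or φ ψ => frozenVarsL φ ++ frozenVarsL ψ
  | .prev _ φ => frozenVarsL φ
  | .next _ φ => frozenVarsL φ
  | .since _ φ ψ => frozenVarsL φ ++ frozenVarsL ψ
  | .until _ φ ψ => frozenVarsL φ ++ frozenVarsL ψ

/-- The list of registers occurring in a formula (with multiplicity). -/
def regsL : Formula P ι V R → List R
  | .tt => []
  | .pred _ _ => []
  | .freeze r _ φ => r :: regsL φ
  | .neg φ => regsL φ
  | .or φ ψ => regsL φ ++ regsL ψ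
  | .prev _ φ => regsL φ
  | .next _ φ => regsL φ
  | .since _ φ ψ => regsL φ ++ regsL ψ
  | .until _ φ ψ => regsL φ ++ regsL ψ

/-- The set `val_w(ψ,J)` of relevant valuations, as an inductively defined relation:
`RelVal φ w ψ j ν` means `ν ∈ val_w(ψ, J)` where `J` is the interval at position `j`. -/
inductive RelVal [DecidableEq V] (φ : Formula P ι V R) (w : List (Letter (Sig P ι R D))) :
    Formula P ι V R → ℕ → (V → Option D) → Prop
  | root (j : ℕ) (hj : j < w.length) : RelVal φ w φ j (fun _ => none)
  | child {ψ γ : Formula P ι V R} {j k : ℕ} {ν μ : V → Option D}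
      (hψ : ψ ≠ φ) (hd : DirectSub ψ γ) (hγ : SubfOf γ φ)
      (hrel : RelVal φ w γ k μ)
      (hdep : Depends ((PsiD w γ k μ).applyS (thetaD w)) (DAtom.sub ψ j ν)) :
      RelVal φ w ψ j ν

end RV
namespace RV

/-! ## Quantified Boolean formulas and the reduction -/

/-- Quantified Boolean formulas over propositions `p₁, …, pₙ`. -/
inductive QBF (n : ℕ) : Type
  | var (i : Fin n) : QBF n
  | neg (φ : QBF n) : QBF n
  | or (φ ψ : QBF n) : QBF n
  | ex (i : Fin n) (φ : QBF n) : QBF n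
  | all (i : Fin n) (φ : QBF n) : QBF n

namespace QBF

/-- Standard semantics of quantified Boolean logic. -/
def sat {n : ℕ} : QBF n → (Fin n → Bool) → Prop
  | var i, v => v i = true
  | neg φ, v => ¬ φ.sat v
  | or φ ψ, v => φ.sat v ∨ ψ.sat v
  | ex i φ, v => ∃ b : Bool, φ.sat (Function.update v i b)
  | all i φ, v => ∀ b : Bool, φ.sat (Function.update v i b)

/-- Free propositions of a QBF formula. -/
def free {n : ℕ} : QBF n → Set (Fin n)
  | var i => {i}
  | neg φ => φ.free
  | or φ ψ => φ.free ∪ ψ.free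
  | ex i φ => φ.free \ {i}
  | all i φ => φ.free \ {i}

def Satisfiable {n : ℕ} (φ : QBF n) : Prop := ∃ v : Fin n → Bool, φ.sat v

end QBF

/-! ### Intervals used in the reduction and syntactic sugar -/

theorem isInterval_univ : IsInterval (Set.univ : Set Q) :=
  ⟨⟨0, trivial⟩, fun _ _ _ _ _ _ _ => trivial⟩

theorem isInterval_Icc01 : IsInterval (Set.Icc (0 : Q) 1) := by
  constructor
  · exact ⟨0, by simp⟩
  · rintro a ⟨-, -⟩ b ⟨-, hb⟩ c hac hcb
    exact ⟨zero_le, le_trans hcb hb⟩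

theorem isInterval_singleton (τ : Q) : IsInterval ({τ} : Set Q) := by
  constructor
  · exact ⟨τ, rfl⟩
  · rintro a ha b hb c hac hcb
    simp only [Set.mem_singleton_iff] at *
    subst ha; subst hb
    exact le_antisymm hcb hac

theorem isInterval_Ioi (τ : Q) : IsInterval (Set.Ioi τ) := by
  constructor
  · exact ⟨τ + 1, by simp⟩
  · rintro a ha b hb c hac hcb
    exact lt_of_lt_of_le ha hac

/-- The interval `[0,∞)`. -/
def ivFull : Iv := ⟨Set.univ, isInterval_univ⟩

/-- The interval `[0,1]`. -/
def iv01 : Iv := ⟨Set.Icc 0 1, isInterval_Icc01⟩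

/-- `eventually_I φ := t U_I φ`. -/
def evtl {P : Type} {ι : P → ℕ} {V R : Type} (I : Iv) (φ : Formula P ι V R) :
    Formula P ι V R :=
  .until I .tt φ

/-- `once φ := t S_{[0,∞)} φ`. -/
def once {P : Type} {ι : P → ℕ} {V R : Type} (φ : Formula P ι V R) : Formula P ι V R :=
  .since ivFull .tt φ

/-- `always_I φ := ¬ eventually_I ¬φ`. -/
def alws {P : Type} {ι : P → ℕ} {V R : Type} (I : Iv) (φ : Formula P ι V R) :
    Formula P ι V R :=
  .neg (evtl I (.neg φ))

/-- `historically φ := ¬ once ¬φ`. -/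
def hist {P : Type} {ι : P → ℕ} {V R : Type} (φ : Formula P ι V R) : Formula P ι V R :=
  .neg (once (.neg φ))

/-- The translation `α ↦ α*` of QBF formulas into MTL↓ formulas. -/
def qbfTrans {n : ℕ} : QBF n → Formula (Fin n) (fun _ => 1) (Fin n) Unit
  | .var i => .pred i (fun _ => i)
  | .neg φ => .neg (qbfTrans φ)
  | .or φ ψ => .or (qbfTrans φ) (qbfTrans ψ)
  | .ex i φ => once (evtl iv01 (.freeze () i (qbfTrans φ)))
  | .all i φ => hist (alws iv01 (.freeze () i (qbfTrans φ)))

/-- The interpretation `σ` of the reduction: `σ(Pᵢ) = {1}` for each `i`. -/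
def sigQBF (n : ℕ) : (p : Fin n) → Option (Set (Fin 1 → Fin 2)) :=
  fun _ => some {fun _ => 1}

/-- The observation `w` of the reduction. -/
def wQBF (n : ℕ) : List (Letter (Sig (Fin n) (fun _ => 1) Unit (Fin 2))) :=
  [ (({0} : Set Q), (sigQBF n, fun _ => some 0)),
    (({1} : Set Q), (sigQBF n, fun _ => some 1)),
    (({3} : Set Q), botSig),
    (Set.Ioi 3, botSig) ]

end RV

namespace RV

/-- Auxiliary: the intervals of an observation are strictly ordered. -/
def OrdRel {A : Type*} : Letter A → Letter A → Prop :=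
  fun p q => ∀ τ ∈ p.1, ∀ τ' ∈ q.1, τ < τ'

lemma pairwise_replace {A : Type*} {u v : List (Letter A)} {x : Letter A}
    {l : List (Letter A)}
    (hp : (u ++ x :: v).Pairwise (OrdRel (A := A)))
    (hsub : ∀ y ∈ l, y.1 ⊆ x.1) (hl : l.Pairwise OrdRel) :
    (u ++ (l ++ v)).Pairwise OrdRel := by
  rw [List.pairwise_append] at hp ⊢
  obtain ⟨hu, hxv, hcross⟩ := hp
  rw [List.pairwise_cons] at hxv
  obtain ⟨hxv', hv⟩ := hxv
  refine ⟨hu, ?_, ?_⟩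
  · rw [List.pairwise_append]
    refine ⟨hl, hv, ?_⟩
    intro a ha b hb τ hτ τ' hτ'
    exact hxv' b hb τ (hsub a ha hτ) τ' hτ'
  · intro a ha b hb
    rcases List.mem_append.1 hb with hb | hb
    · intro τ hτ τ' hτ'
      exact hcross a ha x (by simp) τ hτ τ' (hsub b hb hτ')
    · exact hcross a ha b (by simp [hb])

lemma obs_pairwise {A : Type*} {lt : A → A → Prop} {a0 : A}
    {w : List (Letter A)} (h : Obs lt a0 w) : w.Pairwise OrdRel := by
  induction h with
  | base => simp
  | step _ hs ih =>
    cases hs with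
    | split u v I a τ hI hτ hpos =>
      have := pairwise_replace (u := u) (v := v) (x := (I, a))
        (l := [(I ∩ Set.Iio τ, a), (({τ} : Set Q), a), (I ∩ Set.Ioi τ, a)]) ih
        (by
          rintro y hy
          simp only [List.mem_cons, List.mem_singleton] at hy
          rcases hy with rfl | rfl | rfl | h
          · exact Set.inter_subset_left
          · intro z hz; simpa using hz ▸ hτ
          · exact Set.inter_subset_left
          · exact absurd h (List.not_mem_nil))
        (by
          refine List.pairwise_cons.2 ⟨?_, List.pairwise_cons.2 ⟨?_, List.pairwise_singleton _ _⟩⟩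
          · rintro b hb τ₁ hτ₁ τ' hτ'
            simp only [List.mem_cons, List.mem_singleton] at hb
            rcases hb with rfl | rfl | h
            · simp only [Set.mem_singleton_iff] at hτ'
              exact hτ' ▸ hτ₁.2
            · exact lt_trans hτ₁.2 hτ'.2
            · exact absurd h (List.not_mem_nil)
          · rintro b hb τ₁ hτ₁ τ' hτ'
            simp only [List.mem_singleton] at hb
            subst hb
            simp only [Set.mem_singleton_iff] at hτ₁
            exact hτ₁ ▸ hτ'.2)
      simpa using this
    | split0 u v I a hI hτ =>
      have := pairwise_replace (u := u) (v := v) (x := (I, a))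
        (l := [(({0} : Set Q), a), (I ∩ Set.Ioi 0, a)]) ih
        (by
          rintro y hy
          simp only [List.mem_cons, List.mem_singleton] at hy
          rcases hy with rfl | rfl | h
          · intro z hz; simpa using hz ▸ hτ
          · exact Set.inter_subset_left
          · exact absurd h (List.not_mem_nil))
        (by
          refine List.pairwise_cons.2 ⟨?_, List.pairwise_singleton _ _⟩
          rintro b hb τ₁ hτ₁ τ' hτ'
          simp only [List.mem_singleton] at hb
          subst hb
          simp only [Set.mem_singleton_iff] at hτ₁
          exact hτ₁ ▸ hτ'.2)
      simpa using this
    | remove u v I a hI hbd =>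
      have := pairwise_replace (u := u) (v := v) (x := (I, a)) (l := []) ih
        (by rintro y hy; exact absurd hy (List.not_mem_nil)) (List.Pairwise.nil)
      simpa using this
    | data u v τ a a' hlt =>
      have := pairwise_replace (u := u) (v := v) (x := (({τ} : Set Q), a))
        (l := [(({τ} : Set Q), a')]) ih
        (by
          rintro y hy
          simp only [List.mem_singleton] at hy
          subst hy
          exact subset_rfl)
        (List.pairwise_singleton _ _)
      simpa using this

lemma ivAt_eq {A : Type*} (w : List (Letter A)) (i : ℕ) (hi : i < w.length) :
    ivAt w i = (w[i]).1 := by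
  simp [ivAt, List.getElem?_eq_getElem hi]

/-- if a timed word `v` refines an observation `u`, there is a monotone
map `π : ℕ → pos(u)` with `τ_j ∈ I_{π(j)}`, `σ_{π(j)} ⊑ σ'_j`, and `ρ_{π(j)} ⊑ ρ'_j`. -/
theorem refinesTW_monotone_map
    {P : Type} {ι : P → ℕ} {R D : Type} [Nonempty D]
    (u : List (Letter (Sig P ι R D))) (hu : Obs sigLt botSig u)
    (v : TimedWord (Sig P ι R D)) (huv : RefinesTW u v.seq) :
    ∃ π : ℕ → Fin u.length, Monotone π ∧
      ∀ j : ℕ, (v.seq j).1 ∈ ivAt u (π j : ℕ) ∧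
        sigLe (letAt botSig u (π j : ℕ)) ((v.seq j).2) := by
  have hpw := obs_pairwise hu
  rw [List.pairwise_iff_getElem] at hpw
  choose f h1 h2 h3 using huv
  refine ⟨fun j => ⟨f j, h1 j⟩, ?_, fun j => ⟨h2 j, h3 j⟩⟩
  intro j j' hjj'
  by_contra hcon
  simp only [Fin.mk_le_mk, not_le] at hcon
  have hord := hpw (f j') (f j) (h1 j') (h1 j) hcon
  have hmemj : (v.seq j).1 ∈ (u[f j]'(h1 j)).1 := by rw [← ivAt_eq u (f j) (h1 j)]; exact h2 j
  have hmemj' : (v.seq j').1 ∈ (u[f j']'(h1 j')).1 := by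
    rw [← ivAt_eq u (f j') (h1 j')]; exact h2 j'
  have hlt : (v.seq j').1 < (v.seq j).1 := hord _ hmemj' _ hmemj
  have hle : (v.seq j).1 ≤ (v.seq j').1 := v.strictMono.monotone hjj'
  exact absurd hlt (not_lt.2 hle)

end RV
end

section
/- If w and w' are observations over Σ with w ⊑ w', with letters (Iᵢ,(σᵢ,ρᵢ)) for i ∈ pos(w) and (I'_j,(σ'_j,ρ'_j)) for j ∈ pos(w'), then there exists a monotone function π : pos(w') → pos(w) such that for all j ∈ pos(w'): I'_j ⊆ I_{π(j)}, σ_{π(j)} ⊑ σ'_j, and ρ_{π(j)} ⊑ ρ'_j. -/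
open scoped Classical

namespace RV

theorem sigLe_refl' {P : Type} {ι : P → ℕ} {R D : Type} (s : Sig P ι R D) : sigLe s s :=
  ⟨fun _ _ h => h, fun _ _ h => h⟩

theorem sigLe_trans' {P : Type} {ι : P → ℕ} {R D : Type} {s t u : Sig P ι R D}
    (h1 : sigLe s t) (h2 : sigLe t u) : sigLe s u :=
  ⟨fun a b h => h2.1 a b (h1.1 a b h), fun a b h => h2.2 a b (h1.2 a b h)⟩

theorem cond_of_getElem_eq {P : Type} {ι : P → ℕ} {R D : Type}
    {w w' : List (Letter (Sig P ι R D))} {i j : ℕ}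
    (h : w[i]? = w'[j]?) :
    ivAt w' j ⊆ ivAt w i ∧ sigLe (letAt botSig w i) (letAt botSig w' j) := by
  unfold ivAt letAt
  rw [← h]
  exact ⟨subset_rfl, sigLe_refl' _⟩

theorem step_map {P : Type} {ι : P → ℕ} {R D : Type}
    {w w' : List (Letter (Sig P ι R D))} (h : Step sigLt w w') :
    ∃ π : Fin w'.length → Fin w.length, Monotone π ∧
      ∀ j : Fin w'.length,
        ivAt w' (j : ℕ) ⊆ ivAt w (π j : ℕ) ∧
        sigLe (letAt botSig w (π j : ℕ)) (letAt botSig w' (j : ℕ)) := by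
  cases h with
  | split u v I a τ hI hτ hpos =>
    refine ⟨fun j => ⟨max (min (j : ℕ) u.length) ((j : ℕ) - 2), ?_⟩, ?_, ?_⟩
    · have := j.isLt; simp only [List.length_append, List.length_cons] at this ⊢; omega
    · intro a b hab
      simp only [Fin.le_def] at hab ⊢
      omega
    · intro j
      set n := (j : ℕ) with hn
      simp only [← hn]
      have hjlt := j.isLt
      simp only [List.length_append, List.length_cons] at hjlt
      rcases lt_or_ge n u.length with hcase | hcase
      · have e1 : max (min n u.length) (n - 2) = n := by omega
        simp only [e1]
        exact cond_of_getElem_eq (by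
          rw [List.getElem?_append_left hcase, List.getElem?_append_left hcase])
      · rcases lt_or_ge n (u.length + 3) with hcase2 | hcase2
        · have e1 : max (min n u.length) (n - 2) = u.length := by omega
          simp only [e1]
          have hIv : ivAt (u ++ (I, a) :: v) u.length = I := by
            unfold ivAt
            rw [List.getElem?_append_right le_rfl]
            simp
          have hLet : letAt botSig (u ++ (I, a) :: v) u.length = a := by
            unfold letAt
            rw [List.getElem?_append_right le_rfl]
            simp
          rw [hIv, hLet]
          have hget : (u ++ (I ∩ Set.Iio τ, a) :: (({τ} : Set Q), a) ::
              (I ∩ Set.Ioi τ, a) :: v)[n]? =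
              ((I ∩ Set.Iio τ, a) :: (({τ} : Set Q), a) ::
              (I ∩ Set.Ioi τ, a) :: v)[n - u.length]? :=
            List.getElem?_append_right hcase
          have h3 : n - u.length = 0 ∨ n - u.length = 1 ∨ n - u.length = 2 := by omega
          unfold ivAt letAt
          rcases h3 with h3 | h3 | h3 <;>
            rw [hget, h3] <;>
            simp only [List.getElem?_cons_zero, List.getElem?_cons_succ,
              Option.map_some, Option.getD_some]
          · exact And.intro Set.inter_subset_left (sigLe_refl' _)
          · exact And.intro (Set.singleton_subset_iff.mpr hτ) (sigLe_refl' _)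
          · exact And.intro Set.inter_subset_left (sigLe_refl' _)
        · have e1 : max (min n u.length) (n - 2) = n - 2 := by omega
          simp only [e1]
          obtain ⟨m, hm⟩ : ∃ m, n = u.length + 3 + m := ⟨n - (u.length + 3), by omega⟩
          refine cond_of_getElem_eq ?_
          rw [List.getElem?_append_right (show u.length ≤ n - 2 by omega),
            List.getElem?_append_right (show u.length ≤ n by omega),
            show n - 2 - u.length = m + 1 by omega, show n - u.length = m + 3 by omega]
          simp
  | split0 u v I a hI hτ =>
    refine ⟨fun j => ⟨max (min (j : ℕ) u.length) ((j : ℕ) - 1), ?_⟩, ?_, ?_⟩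
    · have := j.isLt; simp only [List.length_append, List.length_cons] at this ⊢; omega
    · intro a b hab
      simp only [Fin.le_def] at hab ⊢
      omega
    · intro j
      set n := (j : ℕ) with hn
      simp only [← hn]
      have hjlt := j.isLt
      simp only [List.length_append, List.length_cons] at hjlt
      rcases lt_or_ge n u.length with hcase | hcase
      · have e1 : max (min n u.length) (n - 1) = n := by omega
        simp only [e1]
        exact cond_of_getElem_eq (by
          rw [List.getElem?_append_left hcase, List.getElem?_append_left hcase])
      · rcases lt_or_ge n (u.length + 2) with hcase2 | hcase2
        · have e1 : max (min n u.length) (n - 1) = u.length := by omega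
          simp only [e1]
          have hIv : ivAt (u ++ (I, a) :: v) u.length = I := by
            unfold ivAt
            rw [List.getElem?_append_right le_rfl]
            simp
          have hLet : letAt botSig (u ++ (I, a) :: v) u.length = a := by
            unfold letAt
            rw [List.getElem?_append_right le_rfl]
            simp
          rw [hIv, hLet]
          have hget : (u ++ (({0} : Set Q), a) :: (I ∩ Set.Ioi 0, a) :: v)[n]? =
              ((({0} : Set Q), a) :: (I ∩ Set.Ioi 0, a) :: v)[n - u.length]? :=
            List.getElem?_append_right hcase
          have h3 : n - u.length = 0 ∨ n - u.length = 1 := by omega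
          unfold ivAt letAt
          rcases h3 with h3 | h3 <;>
            rw [hget, h3] <;>
            simp only [List.getElem?_cons_zero, List.getElem?_cons_succ,
              Option.map_some, Option.getD_some]
          · exact And.intro (Set.singleton_subset_iff.mpr hτ) (sigLe_refl' _)
          · exact And.intro Set.inter_subset_left (sigLe_refl' _)
        · have e1 : max (min n u.length) (n - 1) = n - 1 := by omega
          simp only [e1]
          obtain ⟨m, hm⟩ : ∃ m, n = u.length + 2 + m := ⟨n - (u.length + 2), by omega⟩
          refine cond_of_getElem_eq ?_
          rw [List.getElem?_append_right (show u.length ≤ n - 1 by omega),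
            List.getElem?_append_right (show u.length ≤ n by omega),
            show n - 1 - u.length = m + 1 by omega, show n - u.length = m + 2 by omega]
          simp
  | remove u v I a hI hbd =>
    refine ⟨fun j => ⟨(j : ℕ) + min 1 ((j : ℕ) + 1 - u.length), ?_⟩, ?_, ?_⟩
    · have := j.isLt; simp only [List.length_append, List.length_cons] at this ⊢
      omega
    · intro a b hab
      simp only [Fin.le_def] at hab ⊢
      omega
    · intro j
      set n := (j : ℕ) with hn
      simp only [← hn]
      have hjlt := j.isLt
      simp only [List.length_append, List.length_cons] at hjlt
      rcases lt_or_ge n u.length with hcase | hcase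
      · have e1 : n + min 1 (n + 1 - u.length) = n := by omega
        simp only [e1]
        exact cond_of_getElem_eq (by
          rw [List.getElem?_append_left hcase, List.getElem?_append_left hcase])
      · have e1 : n + min 1 (n + 1 - u.length) = n + 1 := by omega
        simp only [e1]
        refine cond_of_getElem_eq ?_
        rw [List.getElem?_append_right (show u.length ≤ n + 1 by omega),
          List.getElem?_append_right hcase,
          show n + 1 - u.length = (n - u.length) + 1 by omega]
        exact List.getElem?_cons_succ
  | data u v τ a a' hlt =>
    refine ⟨fun j => ⟨(j : ℕ), ?_⟩, ?_, ?_⟩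
    · have := j.isLt; simp only [List.length_append, List.length_cons] at this ⊢; omega
    · intro a b hab
      simp only [Fin.mk_le_mk]
      exact Fin.le_def.mp hab
    · intro j
      set n := (j : ℕ) with hn
      have hjlt := j.isLt
      simp only [List.length_append, List.length_cons] at hjlt
      rcases lt_or_ge n u.length with hcase | hcase
      · exact cond_of_getElem_eq (by
          rw [List.getElem?_append_left hcase, List.getElem?_append_left hcase])
      · rcases eq_or_lt_of_le hcase with hcase2 | hcase2
        · unfold ivAt letAt
          rw [List.getElem?_append_right hcase, List.getElem?_append_right hcase,
            show n - u.length = 0 by omega]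
          simp only [List.getElem?_cons_zero, Option.map_some, Option.getD_some]
          exact And.intro subset_rfl hlt.1
        · obtain ⟨m, hm⟩ : ∃ m, n = u.length + 1 + m := ⟨n - (u.length + 1), by omega⟩
          refine cond_of_getElem_eq ?_
          rw [List.getElem?_append_right hcase, List.getElem?_append_right hcase,
            show n - u.length = m + 1 by omega]
          simp

/-- if `w ⊑ w'` are observations, there is a monotone map
`π : pos(w') → pos(w)` with `I'_j ⊆ I_{π(j)}`, `σ_{π(j)} ⊑ σ'_j`, and `ρ_{π(j)} ⊑ ρ'_j`. -/
theorem refines_monotone_map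
    {P : Type} {ι : P → ℕ} {R D : Type} [Nonempty D]
    (w w' : List (Letter (Sig P ι R D)))
    (hw : Obs sigLt botSig w) (hw' : Obs sigLt botSig w')
    (hww' : Refines sigLt w w') :
    ∃ π : Fin w'.length → Fin w.length, Monotone π ∧
      ∀ j : Fin w'.length,
        ivAt w' (j : ℕ) ⊆ ivAt w (π j : ℕ) ∧
        sigLe (letAt botSig w (π j : ℕ)) (letAt botSig w' (j : ℕ)) := by
  clear hw hw'
  induction hww' with
  | refl => exact ⟨id, monotone_id, fun j => ⟨subset_rfl, sigLe_refl' _⟩⟩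
  | tail _ hstep ih =>
    obtain ⟨π₁, hm₁, hc₁⟩ := ih
    obtain ⟨π₂, hm₂, hc₂⟩ := step_map hstep
    refine ⟨π₁ ∘ π₂, hm₁.comp hm₂, fun j => ?_⟩
    exact ⟨((hc₂ j).1).trans (hc₁ (π₂ j)).1, sigLe_trans' (hc₁ (π₂ j)).2 (hc₂ j).2⟩

end RV
end

section
/- Let α be a closed quantified Boolean formula over propositions p₁,…,pₙ. Take P = {P₁,…,Pₙ} with each Pᵢ of arity 1, R = {r}, D = {0,1}, and let w be the observation ({0},(σ,ρ₀))({1},(σ,ρ₁))({3},(∅,∅))((3,∞),(∅,∅)), where σ(Pᵢ) = {1} for each i ∈ {1,…,n} and ρ_b(r) = b for b ∈ {0,1}. Define the translation α* of quantified Boolean formulas into MTL↓ by pᵢ* := Pᵢ(xᵢ), (¬β)* := ¬β*, (β∨γ)* := β* ∨ γ*, (∃pᵢ.β)* := once(eventually_{[0,1]} ↓ʳxᵢ β*), and (∀pᵢ.β)* := historically(always_{[0,1]} ↓ʳxᵢ β*). Then α is satisfiable if and only if ⟦w,0,∅⟧ᵉ(α*) = t. -/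
open scoped Classical

namespace RV


/-! ### Helper lemmas for the QBF reduction -/

namespace Tri

@[simp] theorem neg_neg (x : Tri) : x.neg.neg = x := by cases x <;> rfl
@[simp] theorem kand_tt' (x : Tri) : x.kand Tri.tt = x := by cases x <;> rfl
@[simp] theorem tt_kand' (x : Tri) : Tri.kand Tri.tt x = x := rfl
@[simp] theorem ff_kand' (x : Tri) : Tri.kand Tri.ff x = Tri.ff := rfl
@[simp] theorem kand_ff' (x : Tri) : x.kand Tri.ff = Tri.ff := by cases x <;> rfl
@[simp] theorem kor_ff' (x : Tri) : x.kor Tri.ff = x := by cases x <;> rfl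
@[simp] theorem ff_kor' (x : Tri) : Tri.kor Tri.ff x = x := rfl
@[simp] theorem kimp_tt' (x : Tri) : x.kimp Tri.tt = Tri.tt := by cases x <;> rfl

end Tri

@[simp] theorem kOrList_nil : kOrList [] = Tri.ff := rfl
@[simp] theorem kOrList_cons (x : Tri) (l : List Tri) :
    kOrList (x :: l) = x.kor (kOrList l) := rfl
@[simp] theorem kAndList_nil : kAndList [] = Tri.tt := rfl
@[simp] theorem kAndList_cons (x : Tri) (l : List Tri) :
    kAndList (x :: l) = x.kand (kAndList l) := rfl

theorem kAndList_tt {α : Type*} (l : List α) :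
    kAndList (l.map fun _ => Tri.tt) = Tri.tt := by
  induction l with
  | nil => rfl
  | cons a l ih => rw [List.map_cons, kAndList_cons, ih]; rfl

variable {n : ℕ}

@[simp] theorem ivAt_wQBF_zero : ivAt (wQBF n) 0 = ({0} : Set Q) := rfl
@[simp] theorem ivAt_wQBF_one : ivAt (wQBF n) 1 = ({1} : Set Q) := rfl
@[simp] theorem ivAt_wQBF_two : ivAt (wQBF n) 2 = ({3} : Set Q) := rfl
@[simp] theorem ivAt_wQBF_three : ivAt (wQBF n) 3 = Set.Ioi (3 : Q) := rfl

theorem ivSub_singleton (a b : Q) : ivSub ({a} : Set Q) ({b} : Set Q) = {d | b + d = a} := by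
  ext d; simp [ivSub]

theorem ivSub_Ioi_singleton (a b : Q) :
    ivSub (Set.Ioi a) ({b} : Set Q) = {d | a < b + d} := by
  ext d
  constructor
  · rintro ⟨τ, hτ, τ', hτ', h⟩
    rw [Set.mem_singleton_iff] at hτ'
    subst hτ'
    simpa [← h] using hτ
  · intro h; exact ⟨b + d, h, b, rfl, rfl⟩

theorem tp_wQBF_zero : tp (wQBF n) 0 = Tri.tt := by
  rw [tp, ivAt_wQBF_zero]
  rw [if_pos ⟨0, rfl⟩]

theorem tp_wQBF_one : tp (wQBF n) 1 = Tri.tt := by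
  rw [tp, ivAt_wQBF_one]
  rw [if_pos ⟨1, rfl⟩]

theorem tp_wQBF_two : tp (wQBF n) 2 = Tri.tt := by
  rw [tp, ivAt_wQBF_two]
  rw [if_pos ⟨3, rfl⟩]

theorem tp_wQBF_three : tp (wQBF n) 3 = Tri.unk := by
  rw [tp, ivAt_wQBF_three]
  rw [if_neg]
  rintro ⟨τ, hτ⟩
  have h4 : (4 : Q) ∈ Set.Ioi (3 : Q) := by norm_num
  have h5 : (5 : Q) ∈ Set.Ioi (3 : Q) := by norm_num
  rw [hτ, Set.mem_singleton_iff] at h4 h5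
  have : (4 : Q) = 5 := h4.trans h5.symm
  norm_num at this

theorem mc_tt_of {A : Type*} (w : List (Letter A)) (I : Set Q) (i j : ℕ)
    (h1 : (ivSub (ivAt w i) (ivAt w j)).Nonempty)
    (h2 : ivSub (ivAt w i) (ivAt w j) ⊆ I) : mc w I i j = Tri.tt := by
  rw [mc, if_pos ⟨h1, h2⟩]

theorem mc_ff_of {A : Type*} (w : List (Letter A)) (I : Set Q) (i j : ℕ)
    (h : ivSub (ivAt w i) (ivAt w j) ∩ I = ∅) : mc w I i j = Tri.ff := by
  rw [mc, if_neg, if_pos h]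
  rintro ⟨⟨d, hd⟩, hsub⟩
  have : d ∈ ivSub (ivAt w i) (ivAt w j) ∩ I := ⟨hd, hsub hd⟩
  rw [h] at this
  exact this

theorem mem_ivSub_singleton {a b d : Q} : d ∈ ivSub ({a} : Set Q) ({b} : Set Q) ↔ b + d = a := by
  rw [ivSub_singleton]; rfl

theorem mc_univ_00 : mc (wQBF n) Set.univ 0 0 = Tri.tt :=
  mc_tt_of _ _ _ _ ⟨0, by rw [ivAt_wQBF_zero, mem_ivSub_singleton]; simp⟩ (by intro d _; trivial)

theorem mc_univ_10 : mc (wQBF n) Set.univ 1 0 = Tri.tt :=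
  mc_tt_of _ _ _ _ ⟨1, by rw [ivAt_wQBF_one, ivAt_wQBF_zero, mem_ivSub_singleton]; simp⟩
    (by intro d _; trivial)

theorem mc_univ_11 : mc (wQBF n) Set.univ 1 1 = Tri.tt :=
  mc_tt_of _ _ _ _ ⟨0, by rw [ivAt_wQBF_one, mem_ivSub_singleton]; simp⟩ (by intro d _; trivial)

theorem mc01_00 : mc (wQBF n) (Set.Icc 0 1) 0 0 = Tri.tt := by
  apply mc_tt_of
  · exact ⟨0, by rw [ivAt_wQBF_zero, mem_ivSub_singleton]; simp⟩
  · intro d hd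
    rw [ivAt_wQBF_zero, mem_ivSub_singleton, zero_add] at hd
    subst hd
    exact ⟨le_refl _, zero_le⟩

theorem mc01_10 : mc (wQBF n) (Set.Icc 0 1) 1 0 = Tri.tt := by
  apply mc_tt_of
  · exact ⟨1, by rw [ivAt_wQBF_one, ivAt_wQBF_zero, mem_ivSub_singleton]; simp⟩
  · intro d hd
    rw [ivAt_wQBF_one, ivAt_wQBF_zero, mem_ivSub_singleton, zero_add] at hd
    subst hd
    exact ⟨zero_le, le_refl _⟩

theorem mc01_11 : mc (wQBF n) (Set.Icc 0 1) 1 1 = Tri.tt := by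
  apply mc_tt_of
  · exact ⟨0, by rw [ivAt_wQBF_one, mem_ivSub_singleton]; simp⟩
  · intro d hd
    rw [ivAt_wQBF_one, mem_ivSub_singleton] at hd
    have : d = 0 := by
      by_contra h
      have : (1 : Q) < 1 + d := lt_add_of_pos_right _ ((pos_iff_ne_zero.mpr h))
      rw [hd] at this
      exact lt_irrefl _ this
    subst this
    exact ⟨le_refl _, zero_le⟩

theorem mc01_20 : mc (wQBF n) (Set.Icc 0 1) 2 0 = Tri.ff := by
  apply mc_ff_of
  rw [Set.eq_empty_iff_forall_notMem]
  rintro d ⟨hd, -, hle⟩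
  rw [ivAt_wQBF_two, ivAt_wQBF_zero, mem_ivSub_singleton, zero_add] at hd
  subst hd
  norm_num at hle

theorem mc01_21 : mc (wQBF n) (Set.Icc 0 1) 2 1 = Tri.ff := by
  apply mc_ff_of
  rw [Set.eq_empty_iff_forall_notMem]
  rintro d ⟨hd, -, hle⟩
  rw [ivAt_wQBF_two, ivAt_wQBF_one, mem_ivSub_singleton] at hd
  have : (3 : Q) ≤ 1 + 1 := hd ▸ add_le_add_right hle 1
  norm_num at this

theorem mc01_30 : mc (wQBF n) (Set.Icc 0 1) 3 0 = Tri.ff := by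
  apply mc_ff_of
  rw [Set.eq_empty_iff_forall_notMem]
  rintro d ⟨hd, -, hle⟩
  rw [ivAt_wQBF_three, ivAt_wQBF_zero, ivSub_Ioi_singleton] at hd
  have : (3 : Q) < 0 + d := hd
  rw [zero_add] at this
  have := lt_of_lt_of_le this hle
  norm_num at this

theorem mc01_31 : mc (wQBF n) (Set.Icc 0 1) 3 1 = Tri.ff := by
  apply mc_ff_of
  rw [Set.eq_empty_iff_forall_notMem]
  rintro d ⟨hd, -, hle⟩
  rw [ivAt_wQBF_three, ivAt_wQBF_one, ivSub_Ioi_singleton] at hd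
  have : (3 : Q) < 1 + d := hd
  have : (3 : Q) ≤ 1 + 1 := le_trans this.le (add_le_add_right hle 1)
  norm_num at this

@[simp] theorem letAt_wQBF_zero :
    letAt botSig (wQBF n) 0 = ((sigQBF n, fun _ => some 0) : Sig (Fin n) (fun _ => 1) Unit (Fin 2)) := rfl
@[simp] theorem letAt_wQBF_one :
    letAt botSig (wQBF n) 1 = ((sigQBF n, fun _ => some 1) : Sig (Fin n) (fun _ => 1) Unit (Fin 2)) := rfl

theorem len_wQBF : (wQBF n).length = 4 := rfl

theorem osem_once_zero (ψ : Formula (Fin n) (fun _ => 1) (Fin n) Unit)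
    (ν : Fin n → Option (Fin 2)) :
    osem (wQBF n) (once ψ) 0 ν = osem (wQBF n) ψ 0 ν := by
  have h1 : List.range (0 + 1) = [0] := rfl
  have h2 : List.range' (0 + 1) (0 - 0) = [] := rfl
  simp only [once, osem, ivFull, h1, h2, List.map_cons, List.map_nil,
    kOrList_cons, kOrList_nil, kAndList_nil, tp_wQBF_zero, mc_univ_00,
    Tri.tt_kand', Tri.kand_tt', Tri.kor_ff']

theorem osem_once_one (ψ : Formula (Fin n) (fun _ => 1) (Fin n) Unit)
    (ν : Fin n → Option (Fin 2)) :
    osem (wQBF n) (once ψ) 1 ν = (osem (wQBF n) ψ 0 ν).kor (osem (wQBF n) ψ 1 ν) := by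
  have h1 : List.range (1 + 1) = [0, 1] := rfl
  have h2 : List.range' (0 + 1) (1 - 0) = [1] := rfl
  have h3 : List.range' (1 + 1) (1 - 1) = [] := rfl
  simp only [once, osem, ivFull, h1, h2, h3, List.map_cons, List.map_nil,
    kOrList_cons, kOrList_nil, kAndList_cons, kAndList_nil, tp_wQBF_zero, tp_wQBF_one,
    mc_univ_10, mc_univ_11, Tri.tt_kand', Tri.kand_tt', Tri.kor_ff', Tri.kimp_tt']

theorem osem_evtl_zero (ψ : Formula (Fin n) (fun _ => 1) (Fin n) Unit)
    (ν : Fin n → Option (Fin 2)) :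
    osem (wQBF n) (evtl iv01 ψ) 0 ν = (osem (wQBF n) ψ 0 ν).kor (osem (wQBF n) ψ 1 ν) := by
  have h1 : List.range' 0 ((wQBF n).length - 0) = [0, 1, 2, 3] := rfl
  have h2 : List.range' 0 (0 - 0) = [] := rfl
  have h3 : List.range' 0 (1 - 0) = [0] := rfl
  have h4 : List.range' 0 (2 - 0) = [0, 1] := rfl
  have h5 : List.range' 0 (3 - 0) = [0, 1, 2] := rfl
  simp only [evtl, osem, iv01, h1, h2, h3, h4, h5, List.map_cons, List.map_nil,
    kOrList_cons, kOrList_nil, kAndList_cons, kAndList_nil,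
    tp_wQBF_zero, tp_wQBF_one, tp_wQBF_two, tp_wQBF_three,
    mc01_00, mc01_10, mc01_20, mc01_30,
    Tri.tt_kand', Tri.kand_tt', Tri.kor_ff', Tri.kimp_tt', Tri.ff_kand', Tri.kand_ff',
    Tri.ff_kor']

theorem osem_evtl_one (ψ : Formula (Fin n) (fun _ => 1) (Fin n) Unit)
    (ν : Fin n → Option (Fin 2)) :
    osem (wQBF n) (evtl iv01 ψ) 1 ν = osem (wQBF n) ψ 1 ν := by
  have h1 : List.range' 1 ((wQBF n).length - 1) = [1, 2, 3] := rfl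
  have h2 : List.range' 1 (1 - 1) = [] := rfl
  have h3 : List.range' 1 (2 - 1) = [1] := rfl
  have h4 : List.range' 1 (3 - 1) = [1, 2] := rfl
  simp only [evtl, osem, iv01, h1, h2, h3, h4, List.map_cons, List.map_nil,
    kOrList_cons, kOrList_nil, kAndList_cons, kAndList_nil,
    tp_wQBF_one, tp_wQBF_two, tp_wQBF_three,
    mc01_11, mc01_21, mc01_31,
    Tri.tt_kand', Tri.kand_tt', Tri.kor_ff', Tri.kimp_tt', Tri.ff_kand', Tri.kand_ff',
    Tri.ff_kor']

/-- The main correspondence lemma. -/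
theorem qbf_osem (α : QBF n) :
    ∀ (j : ℕ), j = 0 ∨ j = 1 → ∀ (ν : Fin n → Option (Fin 2)) (v : Fin n → Bool),
      (∀ i ∈ α.free, ν i = some (if v i then 1 else 0)) →
      osem (wQBF n) (qbfTrans α) j ν = if α.sat v then Tri.tt else Tri.ff := by
  induction α with
  | var i =>
    intro j hj ν v hν
    have hi : ν i = some (if v i then 1 else 0) := hν i (by simp [QBF.free])
    have hlet : (letAt botSig (wQBF n) j).1 i = some ({fun _ => 1} : Set (Fin 1 → Fin 2)) := by
      rcases hj with rfl | rfl <;> rfl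
    simp only [qbfTrans, osem, QBF.sat]
    by_cases hv : v i
    · rw [if_pos]; simp [hv]
      exact ⟨{fun _ => 1}, fun _ => 1, hlet, fun k => by rw [hi, if_pos hv], rfl⟩
    · rw [if_neg, if_pos]; simp [hv]
      · exact ⟨{fun _ => 1}, fun _ => 0, hlet,
          fun k => by rw [hi, if_neg hv], by
            intro hmem
            rw [Set.mem_singleton_iff] at hmem
            have := congrFun hmem 0
            exact absurd this (by decide)⟩
      · rintro ⟨S, f, hS, hf, hmem⟩
        rw [hlet] at hS
        have hSe : S = {fun _ => 1} := (Option.some.injEq _ _).mp hS.symm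
        have h0 : f 0 = 0 := by
          have := (hf 0).symm.trans hi
          rw [Option.some.injEq] at this
          rw [this, if_neg hv]
        have h1 : f 0 = 1 := by
          rw [hSe, Set.mem_singleton_iff] at hmem
          exact congrFun hmem 0
        rw [h0] at h1
        exact absurd h1 (by decide)
  | neg φ ih =>
    intro j hj ν v hν
    simp only [qbfTrans, osem]
    rw [ih j hj ν v hν]
    by_cases h : φ.sat v
    · rw [if_pos h, if_neg (by simpa [QBF.sat] using h)]
      rfl
    · rw [if_neg h, if_pos (by simpa [QBF.sat] using h)]
      rfl
  | or φ ψ ihφ ihψ =>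
    intro j hj ν v hν
    simp only [qbfTrans, osem]
    rw [ihφ j hj ν v (fun i hi => hν i (Or.inl hi)),
        ihψ j hj ν v (fun i hi => hν i (Or.inr hi))]
    by_cases h1 : φ.sat v <;> by_cases h2 : ψ.sat v <;>
      simp [QBF.sat, h1, h2, Tri.kor]
  | ex i φ ih =>
    intro j hj ν v hν
    have key : ∀ b : Bool,
        osem (wQBF n) (Formula.freeze () i (qbfTrans φ)) (if b then 1 else 0) ν =
          if φ.sat (Function.update v i b) then Tri.tt else Tri.ff := by
      intro b
      have hreg : (letAt botSig (wQBF n) (if b then 1 else 0)).2 () =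
          some (if b then 1 else 0) := by cases b <;> rfl
      have : osem (wQBF n) (Formula.freeze () i (qbfTrans φ)) (if b then 1 else 0) ν =
          osem (wQBF n) (qbfTrans φ) (if b then 1 else 0)
            (Function.update ν i (some (if b then 1 else 0))) := by
        simp only [osem, hreg]
      rw [this]
      apply ih (if b then 1 else 0) (by cases b <;> simp) _ (Function.update v i b)
      intro k hk
      by_cases hki : k = i
      · subst hki
        cases b <;> simp
      · rw [Function.update_of_ne hki, Function.update_of_ne hki]
        exact hν k ⟨hk, hki⟩
    have key0 : osem (wQBF n) (Formula.freeze () i (qbfTrans φ)) 0 ν =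
        if φ.sat (Function.update v i false) then Tri.tt else Tri.ff := key false
    have key1 : osem (wQBF n) (Formula.freeze () i (qbfTrans φ)) 1 ν =
        if φ.sat (Function.update v i true) then Tri.tt else Tri.ff := key true
    have hsat : (QBF.ex i φ).sat v ↔
        φ.sat (Function.update v i false) ∨ φ.sat (Function.update v i true) := by
      constructor
      · rintro ⟨b, hb⟩; cases b
        · exact Or.inl hb
        · exact Or.inr hb
      · rintro (h | h)
        · exact ⟨false, h⟩
        · exact ⟨true, h⟩
    rcases hj with rfl | rfl
    · rw [show qbfTrans (QBF.ex i φ) =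
          once (evtl iv01 (Formula.freeze () i (qbfTrans φ))) from rfl,
        osem_once_zero, osem_evtl_zero, key0, key1]
      by_cases h0 : φ.sat (Function.update v i false) <;>
        by_cases h1 : φ.sat (Function.update v i true) <;>
        simp [hsat, h0, h1, Tri.kor]
    · rw [show qbfTrans (QBF.ex i φ) =
          once (evtl iv01 (Formula.freeze () i (qbfTrans φ))) from rfl,
        osem_once_one, osem_evtl_zero, osem_evtl_one, key0, key1]
      by_cases h0 : φ.sat (Function.update v i false) <;>
        by_cases h1 : φ.sat (Function.update v i true) <;>
        simp [hsat, h0, h1, Tri.kor]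
  | all i φ ih =>
    intro j hj ν v hν
    have key : ∀ b : Bool,
        osem (wQBF n) (Formula.freeze () i (qbfTrans φ)) (if b then 1 else 0) ν =
          if φ.sat (Function.update v i b) then Tri.tt else Tri.ff := by
      intro b
      have hreg : (letAt botSig (wQBF n) (if b then 1 else 0)).2 () =
          some (if b then 1 else 0) := by cases b <;> rfl
      have : osem (wQBF n) (Formula.freeze () i (qbfTrans φ)) (if b then 1 else 0) ν =
          osem (wQBF n) (qbfTrans φ) (if b then 1 else 0)
            (Function.update ν i (some (if b then 1 else 0))) := by
        simp only [osem, hreg]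
      rw [this]
      apply ih (if b then 1 else 0) (by cases b <;> simp) _ (Function.update v i b)
      intro k hk
      by_cases hki : k = i
      · subst hki
        cases b <;> simp
      · rw [Function.update_of_ne hki, Function.update_of_ne hki]
        exact hν k ⟨hk, hki⟩
    set ψf := Formula.freeze () i (qbfTrans φ) with hψf
    have key0 : osem (wQBF n) ψf 0 ν =
        if φ.sat (Function.update v i false) then Tri.tt else Tri.ff := key false
    have key1 : osem (wQBF n) ψf 1 ν =
        if φ.sat (Function.update v i true) then Tri.tt else Tri.ff := key true
    have hsat : (QBF.all i φ).sat v ↔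
        φ.sat (Function.update v i false) ∧ φ.sat (Function.update v i true) := by
      constructor
      · intro h; exact ⟨h false, h true⟩
      · rintro ⟨h0, h1⟩ b; cases b
        · exact h0
        · exact h1
    have hexpand : qbfTrans (QBF.all i φ) =
        Formula.neg (once (Formula.neg (Formula.neg (evtl iv01 (Formula.neg ψf))))) := rfl
    have hdneg : ∀ (k : ℕ) (ν' : Fin n → Option (Fin 2)),
        osem (wQBF n) (Formula.neg (Formula.neg (evtl iv01 (Formula.neg ψf)))) k ν' =
          osem (wQBF n) (evtl iv01 (Formula.neg ψf)) k ν' := by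
      intro k ν'
      show Tri.neg (Tri.neg _) = _
      rw [Tri.neg_neg]
    have hnegψ : ∀ (k : ℕ) (ν' : Fin n → Option (Fin 2)),
        osem (wQBF n) (Formula.neg ψf) k ν' = (osem (wQBF n) ψf k ν').neg := fun _ _ => rfl
    rcases hj with rfl | rfl
    · rw [hexpand]
      show (osem (wQBF n) (once (Formula.neg (Formula.neg (evtl iv01 (Formula.neg ψf))))) 0 ν).neg
          = _
      rw [osem_once_zero, hdneg, osem_evtl_zero, hnegψ, hnegψ, key0, key1]
      by_cases h0 : φ.sat (Function.update v i false) <;>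
        by_cases h1 : φ.sat (Function.update v i true) <;>
        simp [hsat, h0, h1, Tri.kor, Tri.neg]
    · rw [hexpand]
      show (osem (wQBF n) (once (Formula.neg (Formula.neg (evtl iv01 (Formula.neg ψf))))) 1 ν).neg
          = _
      rw [osem_once_one, hdneg, hdneg, osem_evtl_zero, osem_evtl_one, hnegψ, hnegψ, key0, key1]
      by_cases h0 : φ.sat (Function.update v i false) <;>
        by_cases h1 : φ.sat (Function.update v i true) <;>
        simp [hsat, h0, h1, Tri.kor, Tri.neg]

theorem tpPos_wQBF_zero : tpPos (wQBF n) 0 = some 0 := by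
  have hlen : (wQBF n).length = 4 := rfl
  rw [tpPos, hlen, show List.range 4 = 0 :: [1, 2, 3] from rfl]
  rw [List.find?_cons_of_pos]
  exact decide_eq_true rfl

theorem osemE_wQBF_zero (φ : Formula (Fin n) (fun _ => 1) (Fin n) Unit)
    (ν : Fin n → Option (Fin 2)) :
    osemE (wQBF n) φ 0 ν = osem (wQBF n) φ 0 ν := by
  rw [osemE, tpPos_wQBF_zero]
/-- the QBF reduction of Theorem 3 of the paper:
`α` is satisfiable iff `⟦w,0,∅⟧ᵉ(α*) = t`. -/
theorem qbf_reduction {n : ℕ} (α : QBF n) (hclosed : α.free = ∅) :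
    α.Satisfiable ↔ osemE (wQBF n) (qbfTrans α) 0 (fun _ => none) = Tri.tt := by
  rw [osemE_wQBF_zero]
  constructor
  · rintro ⟨v, hv⟩
    rw [qbf_osem α 0 (Or.inl rfl) _ v (by rw [hclosed]; simp), if_pos hv]
  · intro h
    refine ⟨fun _ => false, ?_⟩
    rw [qbf_osem α 0 (Or.inl rfl) (fun _ => none) (fun _ => false)
      (by rw [hclosed]; simp)] at h
    by_contra hs
    rw [if_neg hs] at h
    exact absurd h (by simp)

end RV
end

section
/- For every observation w ∈ Obs(Σ) of length n, the interval of its last letter (at position n−1) is unbounded. -/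
open scoped Classical

namespace RV

private lemma unb_univ : ¬ BddAbove (Set.univ : Set Q) := by
  rintro ⟨x, hx⟩
  have h := hx (Set.mem_univ (x + 1))
  simp at h

private lemma unb_inter_Ioi {I : Set Q} (τ : Q) (h : ¬ BddAbove I) :
    ¬ BddAbove (I ∩ Set.Ioi τ) := by
  rw [not_bddAbove_iff] at h ⊢
  intro x
  obtain ⟨y, hy, hlt⟩ := h (max x τ)
  exact ⟨y, ⟨hy, lt_of_le_of_lt (le_max_right x τ) hlt⟩,
    lt_of_le_of_lt (le_max_left x τ) hlt⟩

private lemma getLast?_append_ne {α : Type*} (u : List α) {v : List α} (h : v ≠ []) :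
    (u ++ v).getLast? = v.getLast? := by
  rw [List.getLast?_append, List.getLast?_eq_getLast h]; rfl

private lemma getLast?_mid {α : Type*} (u : List α) (x : α) (b : α) (v : List α) :
    (u ++ x :: b :: v).getLast? = (b :: v).getLast? := by
  rw [getLast?_append_ne u (by simp), List.getLast?_cons_cons]

/-- the interval of the last letter of an observation is unbounded. -/
theorem lastLetter_unbounded {A : Type} [PartialOrder A]
    (a0 : A) (h0 : ∀ a : A, a0 ≤ a)
    (w : List (Letter A)) (hw : Obs (· < ·) a0 w) :
    ∃ (I : Set Q) (a : A), w.getLast? = some (I, a) ∧ ¬ BddAbove I := by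
  induction hw with
  | base => exact ⟨Set.univ, a0, rfl, unb_univ⟩
  | @step w w' _ hs ih =>
    obtain ⟨I0, b0, hlast, hunb⟩ := ih
    cases hs with
    | split u v I a τ hI hτ hpos =>
      cases v with
      | nil =>
        rw [List.getLast?_concat] at hlast
        obtain ⟨hI0, hb0⟩ := Prod.mk.injEq .. ▸ (Option.some.injEq .. ▸ hlast)
        refine ⟨I ∩ Set.Ioi τ, a, ?_, unb_inter_Ioi τ (hI0 ▸ hunb)⟩
        rw [show u ++ [(I ∩ Set.Iio τ, a), (({τ} : Set Q), a), (I ∩ Set.Ioi τ, a)] =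
          (u ++ [(I ∩ Set.Iio τ, a), (({τ} : Set Q), a)]) ++ [(I ∩ Set.Ioi τ, a)] by simp]
        rw [List.getLast?_concat]
      | cons b v' =>
        rw [getLast?_mid] at hlast
        refine ⟨I0, b0, ?_, hunb⟩
        rw [show u ++ (I ∩ Set.Iio τ, a) :: (({τ} : Set Q), a) :: (I ∩ Set.Ioi τ, a) :: b :: v' =
          (u ++ [(I ∩ Set.Iio τ, a), (({τ} : Set Q), a), (I ∩ Set.Ioi τ, a)]) ++ b :: v'
          by simp]
        rw [getLast?_append_ne _ (by simp)]; exact hlast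
    | split0 u v I a hI hτ =>
      cases v with
      | nil =>
        rw [List.getLast?_concat] at hlast
        obtain ⟨hI0, hb0⟩ := Prod.mk.injEq .. ▸ (Option.some.injEq .. ▸ hlast)
        refine ⟨I ∩ Set.Ioi 0, a, ?_, unb_inter_Ioi 0 (hI0 ▸ hunb)⟩
        rw [show u ++ [(({0} : Set Q), a), (I ∩ Set.Ioi 0, a)] =
          (u ++ [(({0} : Set Q), a)]) ++ [(I ∩ Set.Ioi 0, a)] by simp]
        rw [List.getLast?_concat]
      | cons b v' =>
        rw [getLast?_mid] at hlast
        refine ⟨I0, b0, ?_, hunb⟩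
        rw [show u ++ (({0} : Set Q), a) :: (I ∩ Set.Ioi 0, a) :: b :: v' =
          (u ++ [(({0} : Set Q), a), (I ∩ Set.Ioi 0, a)]) ++ b :: v' by simp]
        rw [getLast?_append_ne _ (by simp)]; exact hlast
    | remove u v I a hI hbd =>
      cases v with
      | nil =>
        rw [List.getLast?_concat] at hlast
        obtain ⟨hI0, hb0⟩ := Prod.mk.injEq .. ▸ (Option.some.injEq .. ▸ hlast)
        exact absurd (hI0 ▸ hbd) hunb
      | cons b v' =>
        rw [getLast?_mid] at hlast
        refine ⟨I0, b0, ?_, hunb⟩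
        rw [getLast?_append_ne _ (by simp : b :: v' ≠ []), hlast]
    | data u v τ a a' h =>
      cases v with
      | nil =>
        rw [List.getLast?_concat] at hlast
        obtain ⟨hI0, hb0⟩ := Prod.mk.injEq .. ▸ (Option.some.injEq .. ▸ hlast)
        exact absurd (hI0 ▸ bddAbove_singleton) hunb
      | cons b v' =>
        rw [getLast?_mid] at hlast
        refine ⟨I0, b0, ?_, hunb⟩
        rw [getLast?_mid, hlast]

end RV
end

section
/- For every observation w ∈ Obs(Σ) and every letter (I, a) of w with |I| > 1, the letter's alphabet component is the least element: a = a₀. -/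
open scoped Classical

namespace RV

/-- every letter of an observation whose interval has more than one
element carries the least element `a₀` of the alphabet. -/
theorem obs_gap_letters_bot {A : Type} [PartialOrder A]
    (a0 : A) (h0 : ∀ a : A, a0 ≤ a)
    (w : List (Letter A)) (hw : Obs (· < ·) a0 w) :
    ∀ l ∈ w, ¬ l.1.Subsingleton → l.2 = a0 := by
  induction hw with
  | base =>
    intro l hl _
    simp only [List.mem_singleton] at hl
    subst hl; rfl
  | step hobs hstep ih =>
    cases hstep with
    | split u v I a τ hI hτ hpos =>
      intro l hl hns
      have hIa : a = a0 := ih (I, a) (by simp) hI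
      simp only [List.mem_append, List.mem_cons] at hl
      rcases hl with h | h | h | h | h
      · exact ih l (by simp [h]) hns
      · subst h; exact hIa
      · subst h; exact absurd Set.subsingleton_singleton hns
      · subst h; exact hIa
      · exact ih l (by simp [h]) hns
    | split0 u v I a hI hτ =>
      intro l hl hns
      have hIa : a = a0 := ih (I, a) (by simp) hI
      simp only [List.mem_append, List.mem_cons] at hl
      rcases hl with h | h | h | h
      · exact ih l (by simp [h]) hns
      · subst h; exact absurd Set.subsingleton_singleton hns
      · subst h; exact hIa
      · exact ih l (by simp [h]) hns
    | remove u v I a hI hbd =>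
      intro l hl hns
      simp only [List.mem_append] at hl
      rcases hl with h | h
      · exact ih l (by simp [h]) hns
      · exact ih l (by simp [h]) hns
    | data u v τ a a' hlt =>
      intro l hl hns
      simp only [List.mem_append, List.mem_cons] at hl
      rcases hl with h | h | h
      · exact ih l (by simp [h]) hns
      · subst h; exact absurd Set.subsingleton_singleton hns
      · exact ih l (by simp [h]) hns

end RV
end
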